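/- Let λ > 0 and θ > 0. Then ( θ − ∫_0^θ (1 − e^{−λx}) dx ) / (1 − e^{−λθ}) = 1/λ, and ( 2·∫_0^θ λ x e^{−λx} dx + θ·e^{−λθ} ) / (1 − e^{−λθ}) = 2/λ − θ/(e^{λθ} − 1), which is strictly less than 2/λ. -/

import Mathlib

open MeasureTheory Real

lemma integral_aux1 (lam : ℝ) (hlam : 0 < lam) (θ : ℝ) (hθ : 0 < θ) :
    (∫ x in Set.Icc 0 θ, (1 - exp (-(lam * x))))
      = θ + exp (-(lam * θ)) / lam - 1 / lam := by
  rw [MeasureTheory.integral_Icc_eq_integral_Ioc,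
    ← intervalIntegral.integral_of_le hθ.le]
  have key : ∀ x ∈ Set.uIcc (0:ℝ) θ,
      HasDerivAt (fun x : ℝ => x + exp (-(lam * x)) / lam)
        (1 - exp (-(lam * x))) x := by
    intro x _
    have h1 : HasDerivAt (fun x : ℝ => exp (-(lam * x))) (-lam * exp (-(lam * x))) x := by
      have := (Real.hasDerivAt_exp (-(lam * x))).comp x
        (((hasDerivAt_id x).const_mul lam).neg)
      exact this.congr_deriv (by ring)
    have := (hasDerivAt_id x).add (h1.div_const lam)
    refine HasDerivAt.congr_deriv this ?_
    field_simp [hlam.ne']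
    ring
  rw [intervalIntegral.integral_eq_sub_of_hasDerivAt key
    (by apply Continuous.intervalIntegrable; continuity)]
  simp

lemma integral_aux2 (lam : ℝ) (hlam : 0 < lam) (θ : ℝ) (hθ : 0 < θ) :
    (∫ x in Set.Icc 0 θ, lam * x * exp (-(lam * x)))
      = 1 / lam - θ * exp (-(lam * θ)) - exp (-(lam * θ)) / lam := by
  rw [MeasureTheory.integral_Icc_eq_integral_Ioc,
    ← intervalIntegral.integral_of_le hθ.le]
  have key : ∀ x ∈ Set.uIcc (0:ℝ) θ,
      HasDerivAt (fun x : ℝ => -(x * exp (-(lam * x))) - exp (-(lam * x)) / lam)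
        (lam * x * exp (-(lam * x))) x := by
    intro x _
    have h1 : HasDerivAt (fun x : ℝ => exp (-(lam * x))) (-lam * exp (-(lam * x))) x := by
      have := (Real.hasDerivAt_exp (-(lam * x))).comp x
        (((hasDerivAt_id x).const_mul lam).neg)
      exact this.congr_deriv (by ring)
    have h2 : HasDerivAt (fun x : ℝ => x * exp (-(lam * x)))
        (1 * exp (-(lam * x)) + x * (-lam * exp (-(lam * x)))) x :=
      (hasDerivAt_id x).mul h1
    have := (h2.neg).sub (h1.div_const lam)
    refine HasDerivAt.congr_deriv this ?_
    field_simp [hlam.ne']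
    ring
  rw [intervalIntegral.integral_eq_sub_of_hasDerivAt key
    (by apply Continuous.intervalIntegrable; continuity)]
  simp
  ring

/-- For the exponential service-time distribution with rate `lam > 0`
(CDF `F(x) = 1 - e^{-lam x}`, density `lam e^{-lam x}`) and any threshold `θ > 0`:
`E[Y(s_θ)] = (θ - ∫_0^θ F(x) dx) / F(θ) = 1/lam`, and the average peak AoI of the
fixed-threshold policy is
`ζ(s_θ) = (2 ∫_0^θ lam x e^{-lam x} dx + θ e^{-lam θ}) / (1 - e^{-lam θ})
       = 2/lam - θ/(e^{lam θ} - 1) < 2/lam`. -/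
theorem stmt_14 (lam : ℝ) (hlam : 0 < lam) (θ : ℝ) (hθ : 0 < θ) :
    (θ - ∫ x in Set.Icc 0 θ, (1 - exp (-(lam * x)))) / (1 - exp (-(lam * θ))) = 1 / lam
      ∧ ((2 * ∫ x in Set.Icc 0 θ, lam * x * exp (-(lam * x))) + θ * exp (-(lam * θ)))
            / (1 - exp (-(lam * θ)))
          = 2 / lam - θ / (exp (lam * θ) - 1)
      ∧ 2 / lam - θ / (exp (lam * θ) - 1) < 2 / lam := by
  have he : exp (-(lam * θ)) < 1 := by
    rw [exp_lt_one_iff]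
    nlinarith
  have he' : (0:ℝ) < 1 - exp (-(lam * θ)) := by linarith
  have he2 : (1:ℝ) < exp (lam * θ) := by
    rw [← exp_zero]
    exact exp_lt_exp.2 (by positivity)
  have he2' : (0:ℝ) < exp (lam * θ) - 1 := by linarith
  have hrel : exp (-(lam * θ)) = (exp (lam * θ))⁻¹ := by
    rw [exp_neg]
  refine ⟨?_, ?_, ?_⟩
  · rw [integral_aux1 lam hlam θ hθ]
    rw [div_eq_div_iff he'.ne' hlam.ne']
    field_simp
    ring
  · rw [integral_aux2 lam hlam θ hθ, hrel]
    have h0 : exp (lam * θ) ≠ 0 := (exp_pos _).ne'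
    field_simp
    ring
  · have : 0 < θ / (exp (lam * θ) - 1) := by positivity
    linarith
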